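/- arXiv:2411.06422 — 2 statements merged into one kernel-verified Lean document; each statement's English description precedes it below -/
import Mathlib

section
/- For 0 < p < 1/2, set α₀ = (1-p)/(1-2p) and α₁ = -p/(1-2p). Then (α₀³+α₁³) - 3(α₀α₁²+α₁α₀²) = (1+2p-2p²)/(1-2p)², and this quantity is strictly less than 1/(1-2p)³. -/
theorem stmt9 (p : ℝ) (hp0 : 0 < p) (hp : p < 1 / 2)
    (α₀ α₁ : ℝ) (hα₀ : α₀ = (1 - p) / (1 - 2 * p)) (hα₁ : α₁ = -p / (1 - 2 * p)) :
    (α₀ ^ 3 + α₁ ^ 3) - 3 * (α₀ * α₁ ^ 2 + α₁ * α₀ ^ 2)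
        = (1 + 2 * p - 2 * p ^ 2) / (1 - 2 * p) ^ 2 ∧
    (1 + 2 * p - 2 * p ^ 2) / (1 - 2 * p) ^ 2 < 1 / (1 - 2 * p) ^ 3 := by
  have hd : (0:ℝ) < 1 - 2 * p := by linarith
  have hd' : (1 - 2 * p) ≠ 0 := ne_of_gt hd
  constructor
  · subst hα₀ hα₁; field_simp; rw [div_eq_div_iff (pow_ne_zero 3 (by intro h; linarith)) (pow_ne_zero 2 (by intro h; linarith))]; ring
  · rw [div_lt_div_iff₀ (by positivity) (by positivity)]
    nlinarith [mul_pos (pow_pos hd 2) (mul_pos (mul_pos hp0 hp0) (by linarith : (0:ℝ) < 1 - p))]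
end

section
/- For 0 < p < 1/2, set α₀ = (1-p)/(1-2p) and α₁ = -p/(1-2p). Define β₀ = α₀⁴ + α₀α₁³ + α₁²α₀² + α₁³α₀, β₁ = 2α₀³α₁ + α₀²α₁² + α₁⁴, and β₂ = 2α₀²α₁² + α₀α₁³ + α₁α₀³. Then β₀ - β₁ - 2β₂ = (1+2p-6p²+4p³)/(1-2p)³, which is strictly less than 1/(1-2p)⁴. -/
theorem stmt10 (p : ℝ) (hp0 : 0 < p) (hp : p < 1 / 2)
    (α₀ α₁ β₀ β₁ β₂ : ℝ)
    (hα₀ : α₀ = (1 - p) / (1 - 2 * p)) (hα₁ : α₁ = -p / (1 - 2 * p))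
    (hβ₀ : β₀ = α₀ ^ 4 + α₀ * α₁ ^ 3 + α₁ ^ 2 * α₀ ^ 2 + α₁ ^ 3 * α₀)
    (hβ₁ : β₁ = 2 * α₀ ^ 3 * α₁ + α₀ ^ 2 * α₁ ^ 2 + α₁ ^ 4)
    (hβ₂ : β₂ = 2 * α₀ ^ 2 * α₁ ^ 2 + α₀ * α₁ ^ 3 + α₁ * α₀ ^ 3) :
    β₀ - β₁ - 2 * β₂ = (1 + 2 * p - 6 * p ^ 2 + 4 * p ^ 3) / (1 - 2 * p) ^ 3 ∧
    (1 + 2 * p - 6 * p ^ 2 + 4 * p ^ 3) / (1 - 2 * p) ^ 3 < 1 / (1 - 2 * p) ^ 4 := by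
  have h : (0:ℝ) < 1 - 2 * p := by linarith
  have hne : (1 - 2 * p) ≠ 0 := ne_of_gt h
  constructor
  · subst hα₀ hα₁ hβ₀ hβ₁ hβ₂
    field_simp [ne_of_gt (by linarith : (0:ℝ) < 1 - p * 2)]
    ring
  · rw [div_lt_div_iff₀ (by positivity) (by positivity)]
    nlinarith [pow_pos h 3, pow_pos h 2, sq_nonneg p, mul_pos hp0 hp0, sq_nonneg (p*(1-2*p))]
end
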